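/- arXiv:1704.06367 — 2 statements merged into one kernel-verified Lean document; each statement's English description precedes it below -/
import Mathlib

section
/- In the monoid algebra R = ℤ[ℚ≥0][ℚ/ℤ] with basis E(r,r') = q^r e(r'), the maps σ̂_{n}(E(r,r')) = E(nr, nr') are ring endomorphisms, and the maps ρ̂_n(E(r,r')) = ∑_{ns = r'} E(r/n, s) satisfy σ̂_n ∘ ρ̂_n = n · id and ρ̂_n(σ̂_n(x)·y) = x·ρ̂_n(y) for all x, y ∈ R. -/
/-- The group `ℚ/ℤ`. -/
abbrev QZ : Type := ℚ ⧸ AddSubgroup.zmultiples (1 : ℚ)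

/-- The ring `R = ℤ[ℚ≥0][ℚ/ℤ]`, the monoid algebra over `ℤ` on `ℚ≥0 × ℚ/ℤ`,
with basis `E(r,r') = q^r e(r')`. -/
abbrev RqQZ : Type := AddMonoidAlgebra ℤ (ℚ≥0 × QZ)

/-- The basis element `E(r,r') = q^r e(r')`. -/
noncomputable def E (r : ℚ≥0) (r' : QZ) : RqQZ := AddMonoidAlgebra.single (r, r') 1

/-- The monoid map `(r, r') ↦ (nr, nr')`. -/
def nSmulPair (n : ℕ) : ℚ≥0 × QZ →+ ℚ≥0 × QZ where
  toFun p := (n • p.1, n • p.2)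
  map_zero' := by simp
  map_add' a b := by simp [smul_add, Prod.add_def]

/-- The ring endomorphism `σ̂ₙ(E(r,r')) = E(nr, nr')`. -/
noncomputable def sigmaHat (n : ℕ) : RqQZ →+* RqQZ :=
  AddMonoidAlgebra.mapDomainRingHom ℤ (nSmulPair n)

/-- The value `ρ̂ₙ(E(r,r')) = ∑_{ns = r'} E(r/n, s)`: the `n` solutions `s` of
`ns = r'` in `ℚ/ℤ` are the classes of `(r̃' + k)/n`, `k = 0,…,n-1`, for any lift `r̃'`. -/
noncomputable def rhoHatVal (n : ℕ) (p : ℚ≥0 × QZ) : RqQZ :=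
  ∑ k ∈ Finset.range n,
    E (p.1 / (n : ℚ≥0)) (QuotientAddGroup.mk ((Quotient.out p.2 + (k : ℚ)) / (n : ℚ)))

/-- The `ℤ`-linear map `ρ̂ₙ` extended from its values on basis elements. -/
noncomputable def rhoHat (n : ℕ) : RqQZ →ₗ[ℤ] RqQZ :=
  (Finsupp.lsum ℤ fun p => LinearMap.toSpanSingleton ℤ RqQZ (rhoHatVal n p)) ∘ₗ
    (AddMonoidAlgebra.coeffLinearEquiv ℤ).toLinearMap

-- lemmas
lemma E_mul_E (r s : ℚ≥0) (r' s' : QZ) : E r r' * E s s' = E (r + s) (r' + s') := by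
  simp [E, AddMonoidAlgebra.single_mul_single, Prod.mk_add_mk]

lemma sigmaHat_E (n : ℕ) (r : ℚ≥0) (r' : QZ) :
    sigmaHat n (E r r') = E (n • r) (n • r') := by
  simp [sigmaHat, E, Finsupp.mapDomain_single, nSmulPair]

lemma mk_natCast_eq_zero (k : ℕ) : (QuotientAddGroup.mk (k : ℚ) : QZ) = 0 := by
  rw [QuotientAddGroup.eq_zero_iff]
  exact ⟨k, by simp⟩

lemma nsmul_mk (n : ℕ) (x : ℚ) :
    n • (QuotientAddGroup.mk x : QZ) = QuotientAddGroup.mk (n • x) := by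
  exact (map_nsmul (QuotientAddGroup.mk' (AddSubgroup.zmultiples (1:ℚ))) n x).symm

lemma mk_out (x : QZ) : (QuotientAddGroup.mk (Quotient.out x) : QZ) = x := Quotient.out_eq x

lemma single_eq_smul (p : ℚ≥0 × QZ) (c : ℤ) :
    (AddMonoidAlgebra.single p c : RqQZ) = c • E p.1 p.2 := by
  rw [E, AddMonoidAlgebra.smul_single', mul_one]

lemma rhoHat_single (n : ℕ) (p : ℚ≥0 × QZ) (c : ℤ) :
    rhoHat n (AddMonoidAlgebra.single p c) = c • rhoHatVal n p := by
  simp [rhoHat, AddMonoidAlgebra.coeffLinearEquiv]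

lemma sigmaHat_rhoHatVal (n : ℕ) (hn : 0 < n) (p : ℚ≥0 × QZ) :
    sigmaHat n (rhoHatVal n p) = n • AddMonoidAlgebra.single p (1:ℤ) := by
  have hn' : (n : ℚ≥0) ≠ 0 := by positivity
  have hnq : (n : ℚ) ≠ 0 := by positivity
  rw [rhoHatVal, map_sum]
  have : ∀ k ∈ Finset.range n,
      sigmaHat n (E (p.1 / (n : ℚ≥0)) (QuotientAddGroup.mk ((Quotient.out p.2 + (k : ℚ)) / (n : ℚ))))
        = AddMonoidAlgebra.single p 1 := by
    intro k _
    rw [sigmaHat_E, nsmul_mk]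
    have h1 : n • (p.1 / (n : ℚ≥0)) = p.1 := by
      rw [nsmul_eq_mul, mul_div_cancel₀ _ hn']
    have h2 : n • ((Quotient.out p.2 + (k : ℚ)) / (n : ℚ)) = Quotient.out p.2 + (k : ℚ) := by
      rw [nsmul_eq_mul, mul_div_cancel₀ _ hnq]
    rw [h2]
    have : (QuotientAddGroup.mk (Quotient.out p.2 + (k : ℚ)) : QZ) = p.2 := by
      rw [QuotientAddGroup.mk_add, mk_natCast_eq_zero, add_zero]
      exact Quotient.out_eq p.2
    rw [h1, this, E]
  rw [Finset.sum_congr rfl this, Finset.sum_const, Finset.card_range]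

lemma mk_eq_mk (x y : ℚ) (d : ℤ) (h : x - y = d) : (QuotientAddGroup.mk x : QZ) = QuotientAddGroup.mk y := by
  rw [QuotientAddGroup.eq_iff_sub_mem]
  exact ⟨d, by simp [h]⟩

lemma shift_mk (n : ℕ) (hn : 0 < n) (b : ℚ) (m : ℤ) (k : ℕ) :
    (QuotientAddGroup.mk ((b + (m : ℚ) + (k : ℚ)) / (n : ℚ)) : QZ)
      = QuotientAddGroup.mk ((b + (((((k : ℤ) + m) % (n : ℤ)).toNat : ℕ) : ℚ)) / (n : ℚ)) := by
  set t : ℤ := ((k : ℤ) + m) % (n : ℤ) with ht'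
  set d : ℤ := ((k : ℤ) + m) / (n : ℤ) with hd'
  have hnz : (n : ℤ) ≠ 0 := by exact_mod_cast hn.ne'
  have ht : 0 ≤ t := Int.emod_nonneg _ hnz
  have hk : (k : ℤ) + m = n * d + t := (Int.mul_ediv_add_emod _ _).symm
  apply mk_eq_mk _ _ d
  have htq : ((t.toNat : ℕ) : ℚ) = (t : ℚ) := by exact_mod_cast Int.toNat_of_nonneg ht
  have hnq : (n : ℚ) ≠ 0 := by positivity
  have hkq : (k : ℚ) + (m : ℚ) = (n : ℚ) * (d : ℚ) + (t : ℚ) := by exact_mod_cast hk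
  rw [div_sub_div_same]
  have : b + (m : ℚ) + (k : ℚ) - (b + ((t.toNat : ℕ) : ℚ)) = (n : ℚ) * (d : ℚ) := by
    rw [htq]; linarith
  rw [this, mul_div_cancel_left₀ _ hnq]

lemma inv_aux (n : ℕ) (hn : 0 < n) (m : ℤ) (a : ℕ) (ha : a < n) :
    ((((((a : ℤ) + m) % (n : ℤ)).toNat : ℤ) - m) % (n : ℤ)).toNat = a := by
  have hnz : (n : ℤ) ≠ 0 := by exact_mod_cast hn.ne'
  have hnpos : (0 : ℤ) < (n : ℤ) := by exact_mod_cast hn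
  have h0 : 0 ≤ ((a : ℤ) + m) % (n : ℤ) := Int.emod_nonneg _ hnz
  rw [Int.toNat_of_nonneg h0]
  have key : (((a : ℤ) + m) % (n : ℤ) - m) % (n : ℤ) = (a : ℤ) := by
    calc (((a : ℤ) + m) % (n : ℤ) - m) % (n : ℤ)
        = (((a : ℤ) + m) % (n : ℤ) % (n : ℤ) - m % (n : ℤ)) % (n : ℤ) := Int.sub_emod _ _ _
      _ = (((a : ℤ) + m) % (n : ℤ) - m % (n : ℤ)) % (n : ℤ) := by
          rw [Int.emod_emod_of_dvd _ dvd_rfl]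
      _ = (((a : ℤ) + m) - m) % (n : ℤ) := (Int.sub_emod _ _ _).symm
      _ = (a : ℤ) % (n : ℤ) := by ring_nf
      _ = (a : ℤ) := Int.emod_eq_of_lt (by positivity) (by exact_mod_cast ha)
  rw [key]
  simp

lemma sum_shift (n : ℕ) (hn : 0 < n) (c : ℚ≥0) (b : ℚ) (m : ℤ) :
    ∑ k ∈ Finset.range n, E c (QuotientAddGroup.mk ((b + (m : ℚ) + (k : ℚ)) / (n : ℚ))) =
    ∑ k ∈ Finset.range n, E c (QuotientAddGroup.mk ((b + (k : ℚ)) / (n : ℚ))) := by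
  have hnz : (n : ℤ) ≠ 0 := by exact_mod_cast hn.ne'
  refine Finset.sum_nbij' (fun k => ((((k : ℤ) + m) % (n : ℤ)).toNat))
    (fun k => ((((k : ℤ) - m) % (n : ℤ)).toNat)) ?_ ?_ ?_ ?_ ?_
  · intro a ha
    simp only [Finset.mem_range] at *
    have h1 := Int.emod_lt_of_pos ((a : ℤ) + m) (by exact_mod_cast hn : (0:ℤ) < (n:ℤ))
    omega
  · intro a ha
    simp only [Finset.mem_range] at *
    have h1 := Int.emod_lt_of_pos ((a : ℤ) - m) (by exact_mod_cast hn : (0:ℤ) < (n:ℤ))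
    omega
  · intro a ha
    simp only [Finset.mem_range] at ha
    exact inv_aux n hn m a ha
  · intro a ha
    simp only [Finset.mem_range] at ha
    have := inv_aux n hn (-m) a ha
    simpa only [add_comm, neg_add_eq_sub, sub_neg_eq_add, ← sub_eq_add_neg] using this
  · intro a _
    rw [shift_mk n hn b m a]

lemma rhoHatVal_add (n : ℕ) (hn : 0 < n) (p q : ℚ≥0 × QZ) :
    rhoHatVal n (nSmulPair n p + q) = E p.1 p.2 * rhoHatVal n q := by
  have hnq0 : (n : ℚ≥0) ≠ 0 := by positivity
  have hnq : (n : ℚ) ≠ 0 := by positivity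
  obtain ⟨m, hm⟩ : ∃ m : ℤ, Quotient.out ((nSmulPair n p + q).2)
      = n • Quotient.out p.2 + Quotient.out q.2 + (m : ℚ) := by
    have h1 : (QuotientAddGroup.mk (Quotient.out ((nSmulPair n p + q).2)) : QZ)
        = QuotientAddGroup.mk (n • Quotient.out p.2 + Quotient.out q.2) := by
      rw [mk_out, QuotientAddGroup.mk_add, ← nsmul_mk, mk_out, mk_out]
      rfl
    rw [QuotientAddGroup.eq_iff_sub_mem] at h1
    rw [AddSubgroup.mem_zmultiples_iff] at h1
    obtain ⟨m, hm⟩ := h1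
    exact ⟨m, by simp only [zsmul_eq_mul, mul_one] at hm; linarith⟩
  have hc : (nSmulPair n p + q).1 / (n : ℚ≥0) = p.1 + q.1 / (n : ℚ≥0) := by
    have : (nSmulPair n p + q).1 = n • p.1 + q.1 := rfl
    rw [this, nsmul_eq_mul, add_div, mul_div_cancel_left₀ _ hnq0]
  have hmk : ∀ k : ℕ, (QuotientAddGroup.mk ((Quotient.out ((nSmulPair n p + q).2) + (k : ℚ)) / (n : ℚ)) : QZ)
      = p.2 + QuotientAddGroup.mk ((Quotient.out q.2 + (m : ℚ) + (k : ℚ)) / (n : ℚ)) := by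
    intro k
    rw [hm]
    have harith : (n • Quotient.out p.2 + Quotient.out q.2 + (m : ℚ) + (k : ℚ)) / (n : ℚ)
        = Quotient.out p.2 + (Quotient.out q.2 + (m : ℚ) + (k : ℚ)) / (n : ℚ) := by
      rw [nsmul_eq_mul]
      field_simp
      ring
    rw [harith, QuotientAddGroup.mk_add, mk_out]
  calc rhoHatVal n (nSmulPair n p + q)
      = ∑ k ∈ Finset.range n, E (p.1 + q.1 / (n : ℚ≥0))
          (p.2 + QuotientAddGroup.mk ((Quotient.out q.2 + (m : ℚ) + (k : ℚ)) / (n : ℚ))) := by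
        rw [rhoHatVal]
        exact Finset.sum_congr rfl fun k _ => by rw [hc, hmk k]
    _ = E p.1 p.2 * ∑ k ∈ Finset.range n,
          E (q.1 / (n : ℚ≥0)) (QuotientAddGroup.mk ((Quotient.out q.2 + (m : ℚ) + (k : ℚ)) / (n : ℚ))) := by
        rw [Finset.mul_sum]
        exact Finset.sum_congr rfl fun k _ => (E_mul_E _ _ _ _).symm
    _ = E p.1 p.2 * rhoHatVal n q := by
        rw [sum_shift n hn (q.1 / (n : ℚ≥0)) (Quotient.out q.2) m, rhoHatVal]


/-- In `R = ℤ[ℚ≥0][ℚ/ℤ]`: the maps `σ̂ₙ : E(r,r') ↦ E(nr,nr')` are ring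
endomorphisms, `σ̂ₙ ∘ ρ̂ₙ = n·id`, and `ρ̂ₙ(σ̂ₙ(x)·y) = x·ρ̂ₙ(y)`. -/
theorem sigmaHat_rhoHat_relations (n : ℕ) (hn : 0 < n) :
    (∀ r s : ℚ≥0, ∀ r' s' : QZ,
        sigmaHat n (E r r') = E (n • r) (n • r') ∧
        sigmaHat n (E r r' * E s s') = sigmaHat n (E r r') * sigmaHat n (E s s')) ∧
      (∀ x : RqQZ, sigmaHat n (rhoHat n x) = n • x) ∧
      (∀ x y : RqQZ, rhoHat n (sigmaHat n x * y) = x * rhoHat n y) := by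
  refine ⟨fun r s r' s' => ⟨sigmaHat_E n r r', map_mul _ _ _⟩, ?_, ?_⟩
  · intro x
    induction x using AddMonoidAlgebra.induction_linear with
    | zero => simp
    | add a b ha hb => rw [map_add, map_add, ha, hb, smul_add]
    | single p c =>
      rw [rhoHat_single, map_zsmul, sigmaHat_rhoHatVal n hn, smul_comm]
      congr 1
      rw [single_eq_smul p c, E]
  · intro x y
    induction x using AddMonoidAlgebra.induction_linear with
    | zero => simp
    | add a b ha hb => rw [map_add, add_mul, map_add, ha, hb, add_mul]
    | single p c =>
      induction y using AddMonoidAlgebra.induction_linear with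
      | zero => simp
      | add a b ha hb => rw [mul_add, map_add, ha, hb, map_add, mul_add]
      | single q d =>
        have h1 : sigmaHat n (AddMonoidAlgebra.single p c) = AddMonoidAlgebra.single (nSmulPair n p) c := by
          simp [sigmaHat, Finsupp.mapDomain_single]
        rw [h1, AddMonoidAlgebra.single_mul_single, rhoHat_single, rhoHat_single,
          rhoHatVal_add n hn p q]
        rw [single_eq_smul, smul_mul_assoc, mul_smul_comm, smul_smul]
end

section
/- Let H be the self-adjoint operator on ℓ²(ℕ⁺) defined by H ε_k = log{k}_q ε_k, where q > 1 is real. Then for β > 1, Tr(e^{-βH}) = ∑_{k≥1} {k}_q^{-β} = ζ_q(β), which is finite. -/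
open scoped RealInnerProductSpace

/-- The `q`-integer `[p]_q = 1 + q + ⋯ + q^(p-1)`. -/
def qInt (q : ℝ) (p : ℕ) : ℝ :=
  ∑ i ∈ Finset.range p, q ^ i

/-- `{n}_q = ∏_i [p_i]_q^{a_i}` where `n = ∏ p_i^{a_i}` is the prime factorization. -/
def qAnalog (q : ℝ) (n : ℕ) : ℝ :=
  n.factorization.prod fun p a => qInt q p ^ a

/-- The Hilbert space `ℓ²(ℕ⁺)`. -/
noncomputable abbrev L2 : Type := lp (fun _ : ℕ+ => ℝ) 2

/-- The standard orthonormal basis vector `ε_k` of `ℓ²(ℕ⁺)`. -/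
noncomputable def eps (k : ℕ+) : L2 := lp.single 2 k 1

lemma qInt_ge (q : ℝ) (hq : 1 ≤ q) (p : ℕ) : (p : ℝ) ≤ qInt q p := by
  calc (p : ℝ) = ∑ _i ∈ Finset.range p, (1 : ℝ) := by simp
    _ ≤ ∑ i ∈ Finset.range p, q ^ i :=
      Finset.sum_le_sum fun i _ => one_le_pow₀ hq

lemma qAnalog_ge (q : ℝ) (hq : 1 ≤ q) (n : ℕ) (hn : n ≠ 0) : (n : ℝ) ≤ qAnalog q n := by
  have h := Nat.factorization_prod_pow_eq_self hn
  calc (n : ℝ) = (n.factorization.prod fun p a => (p : ℝ) ^ a) := by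
        conv_lhs => rw [← h]
        rw [Finsupp.prod, Finsupp.prod]
        push_cast
        rfl
    _ ≤ qAnalog q n := by
        rw [Finsupp.prod, qAnalog, Finsupp.prod]
        apply Finset.prod_le_prod
        · intro p _; positivity
        · intro p hp
          exact pow_le_pow_left₀ (by positivity) (qInt_ge q hq p) _

lemma qAnalog_pos (q : ℝ) (hq : 1 ≤ q) (n : ℕ) (hn : n ≠ 0) : 0 < qAnalog q n :=
  lt_of_lt_of_le (by exact_mod_cast Nat.pos_of_ne_zero hn) (qAnalog_ge q hq n hn)

/-- For the Hamiltonian `H ε_k = log{k}_q ε_k` on `ℓ²(ℕ⁺)` (`q > 1` real), the operator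
`e^{-βH}` acts by `e^{-βH} ε_k = e^{-β log{k}_q} ε_k = {k}_q^{-β} ε_k`, and for `β > 1`
the trace `Tr(e^{-βH}) = ∑_k ⟨ε_k, e^{-βH} ε_k⟩ = ∑_{k≥1} {k}_q^{-β} = ζ_q(β)` is
finite. -/
theorem trace_exp_neg_beta_H (q β : ℝ) (hq : 1 < q) (hβ : 1 < β) :
    Summable (fun k : ℕ+ => ⟪eps k, Real.exp (-β * Real.log (qAnalog q k)) • eps k⟫) ∧
      (∑' k : ℕ+, ⟪eps k, Real.exp (-β * Real.log (qAnalog q k)) • eps k⟫) =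
        ∑' k : ℕ+, (qAnalog q k) ^ (-β) ∧
      Summable (fun k : ℕ+ => (qAnalog q k) ^ (-β)) := by
  have hq' : 1 ≤ q := hq.le
  have hpos : ∀ k : ℕ+, 0 < qAnalog q k := fun k => qAnalog_pos q hq' k k.ne_zero
  have key : ∀ k : ℕ+,
      ⟪eps k, Real.exp (-β * Real.log (qAnalog q k)) • eps k⟫ = (qAnalog q k) ^ (-β) := by
    intro k
    rw [real_inner_smul_right]
    have h1 : ⟪eps k, eps k⟫ = (1 : ℝ) := by
      rw [eps, lp.inner_single_left]
      simp [lp.single_apply]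
    rw [h1, mul_one, Real.rpow_def_of_pos (hpos k), mul_comm]
  have hsum : Summable (fun k : ℕ+ => (qAnalog q k) ^ (-β)) := by
    have hb : Summable (fun n : ℕ => (n : ℝ) ^ (-β)) :=
      (Real.summable_nat_rpow).2 (by linarith)
    have hb' : Summable (fun k : ℕ+ => ((k : ℕ) : ℝ) ^ (-β)) :=
      hb.comp_injective PNat.coe_injective
    refine hb'.of_nonneg_of_le (fun k => (Real.rpow_pos_of_pos (hpos k) _).le) fun k => ?_
    exact Real.rpow_le_rpow_of_nonpos (by exact_mod_cast k.pos)
      (qAnalog_ge q hq' k k.ne_zero) (by linarith)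
  refine ⟨?_, ?_, hsum⟩
  · simpa only [key] using hsum
  · exact tsum_congr key
end
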